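/- Let r₁, r₂ : Ω → ℝ be random variables with E|r_i|^{4+4ε} ≤ M₄ for each i (so that the product r₁r₂ is integrable by Hölder's inequality). Then for every τ > 0, | E[r₁ r₂] − E[ψ_τ(r₁) ψ_τ(r₂)] | ≤ 2 M₄ / τ^{2+4ε}. -/

import Mathlib

open MeasureTheory

/-- The truncation operator `ψ_τ(x) = sign(x) · min(|x|, τ)`. -/
noncomputable def trunc (τ x : ℝ) : ℝ := Real.sign x * min |x| τ

lemma sign_mul_abs' (x : ℝ) : Real.sign x * |x| = x := by
  rcases lt_trichotomy x 0 with h|h|h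
  · rw [Real.sign_of_neg h, abs_of_neg h]; ring
  · simp [h]
  · rw [Real.sign_of_pos h, abs_of_pos h]; ring

lemma abs_sign_le_one (x : ℝ) : |Real.sign x| ≤ 1 := by
  rcases lt_trichotomy x 0 with h|h|h
  · simp [Real.sign_of_neg h]
  · simp [h]
  · simp [Real.sign_of_pos h]

lemma abs_trunc (τ x : ℝ) (hτ : 0 ≤ τ) : |trunc τ x| = min |x| τ := by
  unfold trunc
  rcases eq_or_ne x 0 with h | h
  · simp [h, hτ]
  · rw [abs_mul, abs_of_nonneg (by positivity : (0:ℝ) ≤ min |x| τ)]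
    rcases lt_or_gt_of_ne h with hx | hx
    · simp [Real.sign_of_neg hx]
    · simp [Real.sign_of_pos hx]

lemma trunc_eq (τ x : ℝ) (h : |x| ≤ τ) : trunc τ x = x := by
  unfold trunc
  rw [min_eq_left h, sign_mul_abs']

lemma key (ε τ : ℝ) (hε : 0 < ε) (hτ : 0 < τ) (x y : ℝ) :
    |x * y - trunc τ x * trunc τ y| ≤ (|x| ^ (4 + 4*ε) + |y| ^ (4 + 4*ε)) / τ ^ (2 + 4*ε) := by
  have hrhs : 0 ≤ (|x| ^ (4 + 4*ε) + |y| ^ (4 + 4*ε)) / τ ^ (2 + 4*ε) := by positivity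
  set m := max |x| |y| with hm
  rcases le_or_gt m τ with h | h
  · rw [trunc_eq τ x (le_trans (le_max_left _ _) h), trunc_eq τ y (le_trans (le_max_right _ _) h)]
    simpa using hrhs
  · -- step 1: |x*y - trunc τ x * trunc τ y| ≤ |x| * |y|
    have step1 : |x * y - trunc τ x * trunc τ y| ≤ |x| * |y| := by
      have hxy : x * y = (Real.sign x * Real.sign y) * (|x| * |y|) := by
        rw [show Real.sign x * Real.sign y * (|x| * |y|)
            = (Real.sign x * |x|) * (Real.sign y * |y|) by ring,
          sign_mul_abs', sign_mul_abs']
      have htt : trunc τ x * trunc τ y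
          = (Real.sign x * Real.sign y) * (min |x| τ * min |y| τ) := by
        unfold trunc; ring
      rw [hxy, htt, ← mul_sub, abs_mul]
      have hs : |Real.sign x * Real.sign y| ≤ 1 := by
        rw [abs_mul]
        calc |Real.sign x| * |Real.sign y| ≤ 1 * 1 :=
              mul_le_mul (abs_sign_le_one x) (abs_sign_le_one y) (abs_nonneg _) zero_le_one
          _ = 1 := one_mul 1
      have hd : |(|x| * |y| - min |x| τ * min |y| τ)| ≤ |x| * |y| := by
        rw [abs_of_nonneg]
        · have : 0 ≤ min |x| τ * min |y| τ := by positivity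
          linarith
        · have h1 : min |x| τ * min |y| τ ≤ |x| * |y| :=
            mul_le_mul (min_le_left _ _) (min_le_left _ _) (by positivity) (abs_nonneg _)
          linarith
      calc |Real.sign x * Real.sign y| * |(|x| * |y| - min |x| τ * min |y| τ)|
          ≤ 1 * (|x| * |y|) := mul_le_mul hs hd (abs_nonneg _) zero_le_one
        _ = |x| * |y| := one_mul _
    -- step 2
    have hm0 : 0 < m := lt_trans hτ h
    have step2 : |x| * |y| * τ ^ (2 + 4*ε) ≤ m ^ (4 + 4*ε) := by
      have h1 : |x| * |y| ≤ m * m :=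
        mul_le_mul (le_max_left _ _) (le_max_right _ _) (abs_nonneg _) (le_of_lt hm0)
      have h2 : τ ^ (2 + 4*ε) ≤ m ^ (2 + 4*ε) :=
        Real.rpow_le_rpow hτ.le h.le (by linarith)
      have h3 : m ^ (4 + 4*ε) = (m * m) * m ^ (2 + 4*ε) := by
        rw [show (4 + 4*ε : ℝ) = 2 + (2 + 4*ε) by ring, Real.rpow_add hm0,
          show (2:ℝ) = ((2:ℕ):ℝ) by norm_num, Real.rpow_natCast]
        ring
      rw [h3]
      exact mul_le_mul h1 h2 (by positivity) (by positivity)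
    have step3 : m ^ (4 + 4*ε) ≤ |x| ^ (4 + 4*ε) + |y| ^ (4 + 4*ε) := by
      rcases max_cases |x| |y| with ⟨he, _⟩ | ⟨he, _⟩ <;> rw [hm, he]
      · nlinarith [Real.rpow_nonneg (abs_nonneg y) (4 + 4*ε)]
      · nlinarith [Real.rpow_nonneg (abs_nonneg x) (4 + 4*ε)]
    have hτp : 0 < τ ^ (2 + 4*ε) := Real.rpow_pos_of_pos hτ _
    calc |x * y - trunc τ x * trunc τ y| ≤ |x| * |y| := step1
      _ ≤ (|x| ^ (4 + 4*ε) + |y| ^ (4 + 4*ε)) / τ ^ (2 + 4*ε) := by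
          rw [le_div_iff₀ hτp]; exact step2.trans step3

lemma prod_le_bound (ε : ℝ) (hε : 0 < ε) (x y : ℝ) :
    |x * y| ≤ 1 + (|x| ^ (4 + 4*ε) + |y| ^ (4 + 4*ε)) := by
  set m := max |x| |y| with hm
  have hm0 : 0 ≤ m := le_trans (abs_nonneg x) (le_max_left _ _)
  have h1 : |x * y| ≤ m * m := by
    rw [abs_mul]
    exact mul_le_mul (le_max_left _ _) (le_max_right _ _) (abs_nonneg _) hm0
  have h2 : m * m ≤ 1 + m ^ (4 + 4*ε) := by
    rcases le_or_gt m 1 with h | h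
    · nlinarith [Real.rpow_nonneg hm0 (4 + 4*ε)]
    · have : m ^ (2:ℝ) ≤ m ^ (4 + 4*ε) :=
        Real.rpow_le_rpow_of_exponent_le h.le (by linarith)
      rw [show (2:ℝ) = ((2:ℕ):ℝ) by norm_num, Real.rpow_natCast] at this
      nlinarith
  have h3 : m ^ (4 + 4*ε) ≤ |x| ^ (4 + 4*ε) + |y| ^ (4 + 4*ε) := by
    rcases max_cases |x| |y| with ⟨he, _⟩ | ⟨he, _⟩ <;> rw [hm, he] <;>
      nlinarith [Real.rpow_nonneg (abs_nonneg y) (4 + 4*ε),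
        Real.rpow_nonneg (abs_nonneg x) (4 + 4*ε)]
  linarith

lemma measurable_sign' : Measurable Real.sign := by
  have : Real.sign = fun x => if x < 0 then (-1:ℝ) else if 0 < x then 1 else 0 := by
    funext x; rfl
  rw [this]
  exact Measurable.ite measurableSet_Iio measurable_const
    (Measurable.ite measurableSet_Ioi measurable_const measurable_const)


/-- Truncation bias for a product of two random variables: if `E|rᵢ|^{4+4ε} ≤ M₄` for
each `i`, then for every `τ > 0`,
`|E[r₁r₂] − E[ψ_τ(r₁)ψ_τ(r₂)]| ≤ 2 M₄ / τ^{2+4ε}`. -/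
theorem truncation_bias_second_moment {Ω : Type*} [MeasurableSpace Ω]
    (P : Measure Ω) [IsProbabilityMeasure P]
    (ε M₄ : ℝ) (hε : 0 < ε) (hε1 : ε ≤ 1) (hM : 0 < M₄)
    (r : Fin 2 → Ω → ℝ) (hmeas : ∀ i, Measurable (r i))
    (hint : ∀ i, Integrable (fun ω => |r i ω| ^ (4 + 4 * ε)) P)
    (hmom : ∀ i, ∫ ω, |r i ω| ^ (4 + 4 * ε) ∂P ≤ M₄)
    (τ : ℝ) (hτ : 0 < τ) :
    |(∫ ω, r 0 ω * r 1 ω ∂P) - ∫ ω, trunc τ (r 0 ω) * trunc τ (r 1 ω) ∂P|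
      ≤ 2 * M₄ / τ ^ (2 + 4 * ε) := by
  have hτp : 0 < τ ^ (2 + 4 * ε) := Real.rpow_pos_of_pos hτ _
  -- integrability of the product
  have Int1 : Integrable (fun ω => r 0 ω * r 1 ω) P := by
    apply Integrable.mono' (((hint 0).add (hint 1)).add (integrable_const 1))
      (((hmeas 0).mul (hmeas 1)).aestronglyMeasurable)
    filter_upwards with ω
    have := prod_le_bound ε hε (r 0 ω) (r 1 ω)
    simp only [Real.norm_eq_abs, Pi.add_apply, Pi.mul_apply]
    linarith
  -- measurability of trunc
  have hmt : ∀ i : Fin 2, Measurable (fun ω => trunc τ (r i ω)) := fun i => by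
    unfold trunc
    exact (measurable_sign'.comp (hmeas i)).mul ((hmeas i).abs.min measurable_const)
  have Int2 : Integrable (fun ω => trunc τ (r 0 ω) * trunc τ (r 1 ω)) P := by
    apply Integrable.mono' (integrable_const (τ * τ))
      (((hmt 0).mul (hmt 1)).aestronglyMeasurable)
    filter_upwards with ω
    simp only [Real.norm_eq_abs, Pi.mul_apply, abs_mul, abs_trunc _ _ hτ.le]
    exact mul_le_mul (min_le_right _ _) (min_le_right _ _) (by positivity) hτ.le
  have IntB : Integrable
      (fun ω => (|r 0 ω| ^ (4 + 4*ε) + |r 1 ω| ^ (4 + 4*ε)) / τ ^ (2 + 4*ε)) P :=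
    ((hint 0).add (hint 1)).div_const _
  rw [← integral_sub Int1 Int2]
  calc |∫ ω, (r 0 ω * r 1 ω - trunc τ (r 0 ω) * trunc τ (r 1 ω)) ∂P|
      ≤ ∫ ω, |r 0 ω * r 1 ω - trunc τ (r 0 ω) * trunc τ (r 1 ω)| ∂P :=
        by
        rw [← Real.norm_eq_abs]
        exact (norm_integral_le_integral_norm _).trans_eq (by simp [Real.norm_eq_abs])
    _ ≤ ∫ ω, (|r 0 ω| ^ (4 + 4*ε) + |r 1 ω| ^ (4 + 4*ε)) / τ ^ (2 + 4*ε) ∂P := by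
        apply integral_mono (Int1.sub Int2).abs IntB
        intro ω
        exact key ε τ hε hτ (r 0 ω) (r 1 ω)
    _ = ((∫ ω, |r 0 ω| ^ (4 + 4*ε) ∂P) + ∫ ω, |r 1 ω| ^ (4 + 4*ε) ∂P) / τ ^ (2 + 4*ε) := by
        rw [integral_div, integral_add (hint 0) (hint 1)]
    _ ≤ 2 * M₄ / τ ^ (2 + 4 * ε) := by
        have := hmom 0; have := hmom 1
        gcongr
        linarith
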